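/- arXiv:2202.08219 — 2 statements merged into one kernel-verified Lean document; each statement's English description precedes it below -/
import Mathlib

section
/- Let U ∈ H²(𝕋, ℂ^{d×d}). Then for every constant matrix V ∈ ℂ^{d×d} (viewed as a constant function, an element of ℋ), one has B_U(V) = −i L_U²(V), i.e. i T_{|D|U}(V) − i T_U²(V) = −i ( D − T_U )²(V). -/
open MeasureTheory Complex Matrix
open scoped Real

noncomputable section

instance : Fact (0 < 2 * Real.pi) := ⟨by positivity⟩

/-- The torus `ℝ / 2πℤ`. -/
abbrev Torus := AddCircle (2 * Real.pi)

/-- `d × d` complex matrices. -/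
abbrev Mat (d : ℕ) := Matrix (Fin d) (Fin d) ℂ

/-- Normalized Haar measure (total mass 1) on the torus. -/
abbrev μT : Measure Torus := AddCircle.haarAddCircle

variable {d : ℕ}

/-- Entrywise `n`-th Fourier coefficient of a matrix-valued function on the torus. -/
def mcoeff (f : Torus → Mat d) (n : ℤ) : Mat d :=
  Matrix.of fun i j => fourierCoeff (fun x => f x i j) n

/-- `f ∈ L²(𝕋, ℂ^{d×d})`. -/
def InL2 (f : Torus → Mat d) : Prop :=
  ∀ i j, MemLp (fun x => f x i j) 2 μT

/-- `f ∈ L^∞(𝕋, ℂ^{d×d})`. -/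
def InLinf (f : Torus → Mat d) : Prop :=
  ∀ i j, MemLp (fun x => f x i j) ⊤ μT

/-- `f` belongs to the Sobolev space `H^k(𝕋, ℂ^{d×d})` (Fourier characterization). -/
def InHk (k : ℕ) (f : Torus → Mat d) : Prop :=
  InL2 f ∧ ∀ i j, Summable fun n : ℤ =>
    (n : ℝ) ^ (2 * k) * ‖fourierCoeff (fun x => f x i j) n‖ ^ 2

/-- `f` belongs to the Hardy space `ℋ = L²₊(𝕋, ℂ^{d×d})`: it is `L²` and all its
negatively indexed Fourier coefficients vanish. -/
def IsHardy (f : Torus → Mat d) : Prop :=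
  InL2 f ∧ ∀ n : ℤ, n < 0 → mcoeff f n = 0

/-- `g = Π_{≥0} f`, the Szegő projection of `f` onto the Hardy space. -/
def ProjPosOf (f g : Torus → Mat d) : Prop :=
  InL2 g ∧ ∀ n : ℤ, mcoeff g n = if 0 ≤ n then mcoeff f n else 0

/-- `g = Π_{<0} f = (Id - Π_{≥0}) f`. -/
def ProjNegOf (f g : Torus → Mat d) : Prop :=
  InL2 g ∧ ∀ n : ℤ, mcoeff g n = if n < 0 then mcoeff f n else 0

/-- `g = ∂ₓ f`. -/
def DerivXOf (f g : Torus → Mat d) : Prop :=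
  InL2 g ∧ ∀ n : ℤ, mcoeff g n = (Complex.I * (n : ℂ)) • mcoeff f n

/-- `g = D f` where `D = (1/i) ∂ₓ`. -/
def DOf (f g : Torus → Mat d) : Prop :=
  InL2 g ∧ ∀ n : ℤ, mcoeff g n = (n : ℂ) • mcoeff f n

/-- `g = |D| f`, the Fourier multiplier with symbol `|n|`. -/
def AbsDOf (f g : Torus → Mat d) : Prop :=
  InL2 g ∧ ∀ n : ℤ, mcoeff g n = ((|n| : ℤ) : ℂ) • mcoeff f n

/-- `g = H f`, the Hilbert transform `H = i · sign(D)` (so that `H ∂ₓ = -|D|`). -/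
def HilbertOf (f g : Torus → Mat d) : Prop :=
  InL2 g ∧ ∀ n : ℤ, mcoeff g n = (Complex.I * ((n.sign : ℤ) : ℂ)) • mcoeff f n

/-- `g = T_u f = Π_{≥0}(u f)`, the Toeplitz operator of symbol `u` applied to `f`. -/
def ToeplitzOf (u f g : Torus → Mat d) : Prop :=
  ProjPosOf (fun x => u x * f x) g

/-- `g = L_u f = D f - T_u f`, the Lax operator applied to `f`. -/
def LaxOf (u f g : Torus → Mat d) : Prop :=
  ∃ df tf, DOf f df ∧ ToeplitzOf u f tf ∧ ∀ᵐ x ∂μT, g x = df x - tf x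

/-- `g = L_u^n f`, iterates of the Lax operator. -/
def LaxIterOf (u : Torus → Mat d) : ℕ → (Torus → Mat d) → (Torus → Mat d) → Prop
  | 0, f, g => ∀ᵐ x ∂μT, g x = f x
  | n + 1, f, g => ∃ h, LaxIterOf u n f h ∧ LaxOf u h g

/-- `g = B_u f = i (T_{|D|u} - T_u²) f`. -/
def BOf (u f g : Torus → Mat d) : Prop :=
  ∃ w t1 t2 t3, AbsDOf u w ∧ ToeplitzOf w f t1 ∧ ToeplitzOf u f t2 ∧
    ToeplitzOf u t2 t3 ∧ ∀ᵐ x ∂μT, g x = Complex.I • (t1 x - t3 x)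

/-- The inner product `⟨f|g⟩ = ∫ tr (f g*)` on `L²(𝕋, ℂ^{d×d})`. -/
def hinner (f g : Torus → Mat d) : ℂ :=
  ∫ x, (f x * (g x)ᴴ).trace ∂μT

/-- The mean value `⟨f⟩` of a matrix-valued function on the torus (whose measure is
normalized to total mass 1). -/
def mint (f : Torus → Mat d) : Mat d :=
  Matrix.of fun i j => ∫ x, f x i j ∂μT

/-- Squared (Frobenius) norm of a matrix. -/
def matNormSq (M : Mat d) : ℝ := ∑ i, ∑ j, ‖M i j‖ ^ 2

/-- Squared Sobolev `H^k` norm, via Fourier coefficients (for `k = 0` this is the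
squared `L²` norm, by Parseval). -/
def sobNormSq (k : ℕ) (f : Torus → Mat d) : ℝ :=
  ∑' n : ℤ, (1 + (n : ℝ) ^ 2) ^ k * matNormSq (mcoeff f n)

/-- `f` takes Hermitian values (a.e.). -/
def IsHermitianValued (f : Torus → Mat d) : Prop :=
  ∀ᵐ x ∂μT, (f x)ᴴ = f x

/-- `t ↦ U t` is continuous from `I` into `H^k(𝕋, ℂ^{d×d})`. -/
def ContInHk (k : ℕ) (I : Set ℝ) (U : ℝ → Torus → Mat d) : Prop :=
  ∀ t ∈ I, ∀ ε > 0, ∃ δ > 0, ∀ s ∈ I, |s - t| < δ →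
    sobNormSq k (fun x => U s x - U t x) < ε

/-- `V = ∂ₜ U` on `I`, in the sense of differentiability in `L²(𝕋, ℂ^{d×d})`. -/
def HasL2DerivOn (I : Set ℝ) (U V : ℝ → Torus → Mat d) : Prop :=
  ∀ t ∈ I, ∀ ε > 0, ∃ δ > 0, ∀ s ∈ I, |s - t| < δ →
    sobNormSq 0 (fun x => U s x - U t x - (s - t) • V t x) ≤ ε * (s - t) ^ 2

/-- `U`, with time derivative `∂ₜ U = V`, solves the spin Benjamin–Ono equation
`∂ₜ U = ∂ₓ (|D|U - U²) - i [U, |D|U]` on the time interval `I`. -/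
def SolvesSBO (I : Set ℝ) (U V : ℝ → Torus → Mat d) : Prop :=
  ∀ t ∈ I, ∀ w g : Torus → Mat d, AbsDOf (U t) w →
    DerivXOf (fun x => w x - U t x * U t x) g →
    ∀ᵐ x ∂μT, V t x = g x - Complex.I • (U t x * w x - w x * U t x)

section Helpers

lemma fc_congr {f g : Torus → ℂ} (h : f =ᵐ[μT] g) (n : ℤ) :
    fourierCoeff f n = fourierCoeff g n := by
  unfold fourierCoeff
  exact integral_congr_ae (h.mono fun x hx => by show _ • _ = _ • _; rw [hx])

lemma fc_neg (f : Torus → ℂ) (n : ℤ) :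
    fourierCoeff (fun x => -f x) n = -fourierCoeff f n := by
  unfold fourierCoeff
  simp [smul_neg, integral_neg]

lemma ae_eq_of_fc_eq {f g : Torus → ℂ} (hf : MemLp f 2 μT) (hg : MemLp g 2 μT)
    (h : ∀ n, fourierCoeff f n = fourierCoeff g n) : f =ᵐ[μT] g := by
  have hF := hf.coeFn_toLp
  have hG := hg.coeFn_toLp
  have : hf.toLp f = hg.toLp g := by
    apply fourierBasis.repr.injective
    ext n
    rw [fourierBasis_repr, fourierBasis_repr, fc_congr hF n, fc_congr hG n]
    exact h n
  exact hF.symm.trans (this ▸ hG)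

lemma fc_const_ne_zero (c : ℂ) {n : ℤ} (hn : n ≠ 0) :
    fourierCoeff (fun _ : Torus => c) n = 0 := by
  have h1 : (fun _ : Torus => (1:ℂ)) =ᵐ[μT] (fourierLp (T := 2 * Real.pi) 2 0 : Lp ℂ 2 μT) := by
    filter_upwards [coeFn_fourierLp (T := 2 * Real.pi) 2 0] with x hx
    rw [hx, fourier_zero]
  have h2 : fourierCoeff (fun _ : Torus => (1:ℂ)) n = 0 := by
    rw [fc_congr h1 n, ← fourierBasis_repr]
    rw [show (fourierLp (T := 2 * Real.pi) 2 0 : Lp ℂ 2 μT) = fourierBasis 0 from by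
      rw [coe_fourierBasis]]
    rw [fourierBasis.repr_self]
    simp [lp.single_apply, hn]
  have : (fun _ : Torus => c) = c • (fun _ : Torus => (1:ℂ)) := by ext x; simp
  rw [this, fourierCoeff.const_smul, h2, smul_zero]

lemma integrable_fourier_smul {f : Torus → ℂ} (hf : Integrable f μT) (n : ℤ) :
    Integrable (fun x => fourier n x • f x) μT := by
  simp_rw [smul_eq_mul]
  exact hf.bdd_mul ((map_continuous (fourier n)).aestronglyMeasurable)
    (Filter.Eventually.of_forall fun x => le_of_eq (Circle.norm_coe _))

lemma fc_sub {f g : Torus → ℂ} (hf : Integrable f μT) (hg : Integrable g μT) (n : ℤ) :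
    fourierCoeff (fun x => f x - g x) n = fourierCoeff f n - fourierCoeff g n := by
  unfold fourierCoeff
  rw [← integral_sub (integrable_fourier_smul hf (-n)) (integrable_fourier_smul hg (-n))]
  congr 1; ext x; rw [smul_sub]

lemma fc_sum {ι : Type*} (s : Finset ι) (F : ι → Torus → ℂ)
    (hF : ∀ k ∈ s, Integrable (F k) μT) (n : ℤ) :
    fourierCoeff (fun x => ∑ k ∈ s, F k x) n = ∑ k ∈ s, fourierCoeff (F k) n := by
  unfold fourierCoeff
  rw [← integral_finset_sum s (fun k hk => integrable_fourier_smul (hF k hk) (-n))]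
  congr 1; ext x; rw [Finset.smul_sum]

variable {d : ℕ}

lemma mcoeff_congr {f g : Torus → Mat d} (h : ∀ᵐ x ∂μT, f x = g x) (n : ℤ) :
    mcoeff f n = mcoeff g n := by
  ext i j
  exact fc_congr (h.mono fun x hx => by rw [hx]) n

lemma mcoeff_neg (f : Torus → Mat d) (n : ℤ) :
    mcoeff (fun x => -f x) n = -mcoeff f n := by
  ext i j
  simp only [mcoeff, Matrix.of_apply, Matrix.neg_apply]
  exact fc_neg _ n

lemma mcoeff_sub {f g : Torus → Mat d} (hf : InL2 f) (hg : InL2 g) (n : ℤ) :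
    mcoeff (fun x => f x - g x) n = mcoeff f n - mcoeff g n := by
  ext i j
  simp only [mcoeff, Matrix.of_apply, Matrix.sub_apply]
  exact fc_sub ((hf i j).integrable one_le_two) ((hg i j).integrable one_le_two) n

lemma mcoeff_const (V : Mat d) {n : ℤ} (hn : n ≠ 0) :
    mcoeff (fun _ : Torus => V) n = 0 := by
  ext i j
  simp only [mcoeff, Matrix.of_apply, Matrix.zero_apply]
  exact fc_const_ne_zero _ hn

lemma mcoeff_mul_const {f : Torus → Mat d} (hf : InL2 f) (C : Mat d) (n : ℤ) :
    mcoeff (fun x => f x * C) n = mcoeff f n * C := by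
  ext i j
  simp only [mcoeff, Matrix.of_apply, Matrix.mul_apply]
  rw [fc_sum Finset.univ (fun k x => f x i k * C k j)
    (fun k _ => ((hf i k).integrable one_le_two).mul_const _) n]
  congr 1; ext k
  rw [show (fun x => f x i k * C k j) = fun x => C k j * f x i k from by ext x; ring,
    fourierCoeff.const_mul]
  ring

lemma InL2_neg {f : Torus → Mat d} (hf : InL2 f) : InL2 (fun x => -f x) := by
  intro i j
  have : (fun x => (-f x) i j) = fun x => -(f x i j) := by ext x; simp
  rw [this]
  exact (hf i j).neg

lemma ae_of_mcoeff {f g : Torus → Mat d} (hf : InL2 f) (hg : InL2 g)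
    (h : ∀ n, mcoeff f n = mcoeff g n) : ∀ᵐ x ∂μT, f x = g x := by
  have H : ∀ i j, ∀ᵐ x ∂μT, f x i j = g x i j := fun i j =>
    ae_eq_of_fc_eq (hf i j) (hg i j) (fun n => congrFun (congrFun (h n) i) j)
  have : ∀ᵐ x ∂μT, ∀ i, ∀ j, f x i j = g x i j := by
    rw [ae_all_iff]; intro i; rw [ae_all_iff]; exact H i
  filter_upwards [this] with x hx
  ext i j; exact hx i j

end Helpers
/-- For `U ∈ H²(𝕋, ℂ^{d×d})` and every constant matrix `V ∈ ℂ^{d×d}` (viewed as a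
constant function in `ℋ`), one has `B_U(V) = -i L_U²(V)`, i.e.
`i T_{|D|U}(V) - i T_U²(V) = -i (D - T_U)²(V)`. -/
theorem B_on_constants {d : ℕ} (hd : 1 ≤ d)
    (U : Torus → Mat d) (hU : InHk 2 U) (V : Mat d) :
    ∀ G L1 L2 : Torus → Mat d,
      BOf U (fun _ => V) G →
      LaxOf U (fun _ => V) L1 → LaxOf U L1 L2 →
      ∀ᵐ x ∂μT, G x = -Complex.I • L2 x := by
  intro G L1 L2 hB hL1 hL2
  obtain ⟨w, t1, t2, t3, hw, ht1, ht2, ht3, hG⟩ := hB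
  obtain ⟨df, tf, hdf, htf, hL1e⟩ := hL1
  obtain ⟨df2, tf2, hdf2, htf2, hL2e⟩ := hL2
  have hUL2 : InL2 U := hU.1
  -- coefficients of df vanish
  have hdfc : ∀ n : ℤ, mcoeff df n = 0 := by
    intro n
    rcases eq_or_ne n 0 with h | h
    · rw [hdf.2 n, h]; simp
    · rw [hdf.2 n, mcoeff_const V h, smul_zero]
  -- product with constant
  have hmUV : ∀ n : ℤ, mcoeff (fun x => U x * V) n = mcoeff U n * V :=
    fun n => mcoeff_mul_const hUL2 V n
  have hmwV : ∀ n : ℤ, mcoeff (fun x => w x * V) n = mcoeff w n * V :=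
    fun n => mcoeff_mul_const hw.1 V n
  -- L1 coefficients
  have hL1c : ∀ n : ℤ, mcoeff L1 n = -mcoeff tf n := by
    intro n
    rw [mcoeff_congr hL1e n, mcoeff_sub hdf.1 htf.1 n, hdfc n, zero_sub]
  -- L1 is L2
  have hL1L2 : InL2 L1 := by
    intro i j
    have hae : (fun x => L1 x i j) =ᵐ[μT] fun x => df x i j - tf x i j := by
      filter_upwards [hL1e] with x hx
      rw [hx]; rfl
    exact (memLp_congr_ae hae).mpr ((hdf.1 i j).sub (htf.1 i j))
  -- L1 = -t2 a.e.
  have hL1t2 : ∀ᵐ x ∂μT, L1 x = -t2 x := by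
    apply ae_of_mcoeff hL1L2 (InL2_neg ht2.1)
    intro n
    rw [mcoeff_neg, hL1c n, ht2.2 n, htf.2 n]
  -- tf2 = -t3 in coefficients
  have hUL1 : ∀ n : ℤ, mcoeff (fun x => U x * L1 x) n = -mcoeff (fun x => U x * t2 x) n := by
    intro n
    have hae : (fun x => U x * L1 x) =ᵐ[μT] fun x => -(U x * t2 x) := by
      filter_upwards [hL1t2] with x hx
      rw [hx, Matrix.mul_neg]
    rw [mcoeff_congr hae n, show (fun x => -(U x * t2 x)) = fun x => -((fun y => U y * t2 y) x) from rfl,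
      mcoeff_neg]
  have htf2c : ∀ n : ℤ, mcoeff tf2 n = -mcoeff t3 n := by
    intro n
    rw [htf2.2 n, ht3.2 n, hUL1 n]
    split <;> simp
  have htf2t3 : ∀ᵐ x ∂μT, tf2 x = -t3 x := by
    apply ae_of_mcoeff htf2.1 (InL2_neg ht3.1)
    intro n
    rw [mcoeff_neg, htf2c n]
  -- df2 = -t1 in coefficients
  have ht1c : ∀ n : ℤ, mcoeff t1 n = if 0 ≤ n then (n : ℂ) • (mcoeff U n * V) else 0 := by
    intro n
    rw [ht1.2 n]
    split
    · rename_i h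
      rw [hmwV n, hw.2 n, abs_of_nonneg h, smul_mul_assoc]
    · rfl
  have hdf2c : ∀ n : ℤ, mcoeff df2 n = -mcoeff t1 n := by
    intro n
    rw [hdf2.2 n, hL1c n, htf.2 n, ht1c n]
    split
    · rw [hmUV n, smul_neg]
    · simp
  have hdf2t1 : ∀ᵐ x ∂μT, df2 x = -t1 x := by
    apply ae_of_mcoeff hdf2.1 (InL2_neg ht1.1)
    intro n
    rw [mcoeff_neg, hdf2c n]
  -- conclude
  filter_upwards [hG, hL2e, hdf2t1, htf2t3] with x h1 h2 h3 h4
  rw [h1, h2, h3, h4]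
  simp only [sub_eq_add_neg, smul_add, smul_neg, neg_smul, neg_neg]
end
end

section
/- Normalize the measure of 𝕋 to total mass 1 and let U ∈ C^∞(𝕋, ℂ^{d×d}) be Hermitian-valued. Then for every integer k ≥ 0, 𝓔_k(U) = tr(𝓜_k(U)), where 𝓔_k(U) = ⟨L_U^k(Π_{≥0}U) | Π_{≥0}U⟩ and 𝓜_k(U) = ∫_𝕋 L_U^{k+2}(𝟏) dx, with 𝟏 the identity matrix viewed as a constant function in ℋ. -/
open MeasureTheory Complex Matrix
open scoped Real
open scoped ComplexConjugate ENNReal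

noncomputable section

variable {d : ℕ}

namespace Aux


lemma fourierCoeff_congr_ae {a b : Torus → ℂ} (h : ∀ᵐ x ∂μT, a x = b x) (n : ℤ) :
    fourierCoeff a n = fourierCoeff b n :=
  integral_congr_ae (h.mono fun x hx => by simp only [hx])

lemma fourierCoeff_neg_fun (a : Torus → ℂ) (n : ℤ) :
    fourierCoeff (fun x => -a x) n = -fourierCoeff a n := by
  simp only [fourierCoeff, smul_neg]
  exact integral_neg _

lemma fourierCoeff_zero_eq (a : Torus → ℂ) :
    fourierCoeff a 0 = ∫ x, a x ∂μT := by
  simp only [fourierCoeff, neg_zero, fourier_zero, one_smul]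

lemma fourierCoeff_one (n : ℤ) :
    fourierCoeff (fun _ : Torus => (1 : ℂ)) n = if n = 0 then 1 else 0 := by
  classical
  have h1 : fourierCoeff (fun _ : Torus => (1 : ℂ)) n
      = fourierCoeff (((fourierBasis (T := 2 * Real.pi)) 0 : Lp ℂ 2 μT) : Torus → ℂ) n := by
    refine (fourierCoeff_congr_ae ?_ n).symm
    have := coeFn_fourierLp (T := 2 * Real.pi) 2 0
    rw [coe_fourierBasis]
    filter_upwards [this] with x hx
    rw [hx, fourier_zero]
  rw [h1, ← fourierBasis_repr, HilbertBasis.repr_self, lp.single_apply]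
  simp [Pi.single_apply]

lemma fourierCoeff_const (c : ℂ) (n : ℤ) :
    fourierCoeff (fun _ : Torus => c) n = if n = 0 then c else 0 := by
  have := fourierCoeff.const_mul (fun _ : Torus => (1 : ℂ)) c n
  simp only [mul_one] at this
  rw [this, fourierCoeff_one]
  split_ifs <;> simp

/-- Uniqueness: an L² function is determined a.e. by its Fourier coefficients. -/
lemma ae_eq_of_fourierCoeff {a b : Torus → ℂ} (ha : MemLp a 2 μT) (hb : MemLp b 2 μT)
    (h : ∀ n : ℤ, fourierCoeff a n = fourierCoeff b n) : ∀ᵐ x ∂μT, a x = b x := by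
  have h1 : ha.toLp a = hb.toLp b := by
    apply fourierBasis.repr.injective
    ext n
    rw [fourierBasis_repr, fourierBasis_repr]
    rw [fourierCoeff_congr_ae (ha.coeFn_toLp) n, fourierCoeff_congr_ae (hb.coeFn_toLp) n]
    exact h n
  have := ha.coeFn_toLp.symm.trans ((h1 ▸ (hb.coeFn_toLp).symm).symm)
  filter_upwards [ha.coeFn_toLp, hb.coeFn_toLp, this] with x h2 h3 h4
  exact h4

/-- fourierCoeff of conjugate. -/
lemma fourierCoeff_conj (a : Torus → ℂ) (n : ℤ) :
    fourierCoeff (fun x => conj (a x)) n = conj (fourierCoeff a (-n)) := by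
  simp only [fourierCoeff, smul_eq_mul]
  rw [← integral_conj]
  congr 1
  ext x
  rw [neg_neg, _root_.map_mul, ← fourier_neg]

/-- Parseval orthogonality lemma. -/
lemma integral_mul_eq_zero {a b : Torus → ℂ} (ha : MemLp a 2 μT) (hb : MemLp b 2 μT)
    (h : ∀ n : ℤ, fourierCoeff a (-n) * fourierCoeff b n = 0) :
    ∫ x, a x * b x ∂μT = 0 := by
  have hac : MemLp (fun x => conj (a x)) 2 μT := by
    refine ⟨Complex.continuous_conj.comp_aestronglyMeasurable ha.1, ?_⟩
    have he : eLpNorm (fun x => conj (a x)) 2 μT = eLpNorm a 2 μT := eLpNorm_conj a 2 μT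
    rw [he]; exact ha.2
  set F : Lp ℂ 2 μT := hac.toLp _ with hF
  set G : Lp ℂ 2 μT := hb.toLp _ with hG
  have key : (inner ℂ F G : ℂ) = ∫ x, a x * b x ∂μT := by
    rw [MeasureTheory.L2.inner_def]
    refine integral_congr_ae ?_
    filter_upwards [hac.coeFn_toLp, hb.coeFn_toLp] with x h1 h2
    rw [← hF, ← hG] at *
    simp only [RCLike.inner_apply, h1, h2, Complex.conj_conj, mul_comm]
  rw [← key, ← (fourierBasis (T := 2 * Real.pi)).tsum_inner_mul_inner F G]
  have hterm : ∀ n : ℤ, (inner ℂ F ((fourierBasis (T := 2 * Real.pi)) n) : ℂ)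
      * (inner ℂ ((fourierBasis (T := 2 * Real.pi)) n) G : ℂ) = 0 := by
    intro n
    have h1 : fourierCoeff (F : Torus → ℂ) n = conj (fourierCoeff a (-n)) :=
      (fourierCoeff_congr_ae hac.coeFn_toLp n).trans (fourierCoeff_conj a n)
    have h1' : (inner ℂ F ((fourierBasis (T := 2 * Real.pi)) n) : ℂ) = fourierCoeff a (-n) := by
      rw [← inner_conj_symm, ← HilbertBasis.repr_apply_apply, fourierBasis_repr, h1,
        Complex.conj_conj]
    have h2 : (inner ℂ ((fourierBasis (T := 2 * Real.pi)) n) G : ℂ) = fourierCoeff b n := by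
      rw [← HilbertBasis.repr_apply_apply, fourierBasis_repr,
        fourierCoeff_congr_ae hb.coeFn_toLp n]
    rw [h1', h2]
    exact h n
  rw [tsum_congr hterm, tsum_zero]



/-- Product of two L² functions is integrable. -/
lemma integrable_mul2 {a b : Torus → ℂ} (ha : MemLp a 2 μT) (hb : MemLp b 2 μT) :
    Integrable (fun x => a x * b x) μT := by
  have hpqr : (1 : ℝ≥0∞) / 1 = 1 / 2 + 1 / 2 := by
    simp [one_div, ENNReal.inv_two_add_inv_two]
  have h2 : MemLp (a • b) 1 μT := MemLp.smul (r := 1) (hpqr := ⟨by rw [ENNReal.inv_two_add_inv_two, inv_one]⟩) hb ha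
  have h3 : (a • b : Torus → ℂ) = fun x => a x * b x := rfl
  rw [h3] at h2
  exact memLp_one_iff_integrable.mp h2

lemma memℒp_conj {a : Torus → ℂ} (ha : MemLp a 2 μT) :
    MemLp (fun x => (starRingEnd ℂ) (a x)) 2 μT := by
  refine ⟨Complex.continuous_conj.comp_aestronglyMeasurable ha.1, ?_⟩
  have he : eLpNorm (fun x => (starRingEnd ℂ) (a x)) 2 μT = eLpNorm a 2 μT := eLpNorm_conj a 2 μT
  rw [he]; exact ha.2


end Aux

namespace Aux

variable {d : ℕ}

lemma mcoeff_apply (f : Torus → Mat d) (n : ℤ) (i j : Fin d) :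
    mcoeff f n i j = fourierCoeff (fun x => f x i j) n := rfl

lemma mcoeff_congr {f g : Torus → Mat d} (h : ∀ᵐ x ∂μT, f x = g x) (n : ℤ) :
    mcoeff f n = mcoeff g n := by
  ext i j
  exact fourierCoeff_congr_ae (h.mono fun x hx => by rw [hx]) n

lemma mcoeff_negf (f : Torus → Mat d) (n : ℤ) :
    mcoeff (fun x => -f x) n = -mcoeff f n := by
  ext i j
  have h1 : (fun x => (-f x) i j) = fun x => -(f x i j) := rfl
  rw [mcoeff_apply, h1, fourierCoeff_neg_fun]
  rfl

lemma InL2.negf {f : Torus → Mat d} (hf : InL2 f) : InL2 (fun x => -f x) :=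
  fun i j => (hf i j).neg

lemma InL2.congr' {f g : Torus → Mat d} (hf : InL2 f) (h : ∀ᵐ x ∂μT, f x = g x) : InL2 g :=
  fun i j => MemLp.ae_eq (h.mono fun x hx => by rw [hx]) (hf i j)

lemma matrix_ae_eq_of_mcoeff {f g : Torus → Mat d} (hf : InL2 f) (hg : InL2 g)
    (h : ∀ n : ℤ, mcoeff f n = mcoeff g n) : ∀ᵐ x ∂μT, f x = g x := by
  have h1 : ∀ i j, ∀ᵐ x ∂μT, f x i j = g x i j := fun i j =>
    ae_eq_of_fourierCoeff (hf i j) (hg i j) (fun n => congrFun (congrFun (h n) i) j)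
  have h2 : ∀ᵐ x ∂μT, ∀ i, ∀ j, f x i j = g x i j := by
    rw [MeasureTheory.ae_all_iff]
    intro i
    rw [MeasureTheory.ae_all_iff]
    intro j
    exact h1 i j
  filter_upwards [h2] with x hx
  ext i j
  exact hx i j

lemma InL2_zero : InL2 (fun _ : Torus => (0 : Mat d)) :=
  fun _ _ => memLp_const 0

lemma mcoeff_zero_fun (n : ℤ) : mcoeff (fun _ : Torus => (0 : Mat d)) n = 0 := by
  ext i j
  rw [mcoeff_apply]
  have h1 : (fun _ : Torus => (0 : Mat d) i j) = fun _ : Torus => (0 : ℂ) := rfl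
  rw [h1, fourierCoeff_const]
  simp

lemma mcoeff_one_mat (n : ℤ) :
    mcoeff (fun _ : Torus => (1 : Mat d)) n = if n = 0 then (1 : Mat d) else 0 := by
  ext i j
  rw [mcoeff_apply, fourierCoeff_const]
  split_ifs with hn
  · rfl
  · simp

lemma integrable_of_L2 {a : Torus → ℂ} (ha : MemLp a 2 μT) : Integrable a μT :=
  ha.integrable one_le_two

lemma fourierCoeff_sub {a b : Torus → ℂ} (ha : MemLp a 2 μT) (hb : MemLp b 2 μT) (n : ℤ) :
    fourierCoeff (fun x => a x - b x) n = fourierCoeff a n - fourierCoeff b n := by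
  simp only [fourierCoeff, smul_sub]
  refine integral_sub ?_ ?_
  · exact (integrable_of_L2 ha).bdd_mul
      ((map_continuous (fourier (-n))).aestronglyMeasurable) (Filter.Eventually.of_forall fun x => by
        rw [fourier_apply]; exact le_of_eq (Circle.norm_coe _)) |>.congr (Filter.Eventually.of_forall fun x => by
          simp [smul_eq_mul])
  · exact (integrable_of_L2 hb).bdd_mul
      ((map_continuous (fourier (-n))).aestronglyMeasurable) (Filter.Eventually.of_forall fun x => by
        rw [fourier_apply]; exact le_of_eq (Circle.norm_coe _)) |>.congr (Filter.Eventually.of_forall fun x => by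
          simp [smul_eq_mul])

lemma mcoeff_sub {f g : Torus → Mat d} (hf : InL2 f) (hg : InL2 g) (n : ℤ) :
    mcoeff (fun x => f x - g x) n = mcoeff f n - mcoeff g n := by
  ext i j
  rw [mcoeff_apply]
  have h1 : (fun x => (f x - g x) i j) = fun x => f x i j - g x i j := rfl
  rw [h1, fourierCoeff_sub (hf i j) (hg i j)]
  rfl

end Aux

namespace Aux

variable {d : ℕ}

lemma lax_congr_neg {U f₁ f₂ g₁ g₂ : Torus → Mat d} (hf : ∀ᵐ x ∂μT, f₁ x = -f₂ x)
    (h1 : LaxOf U f₁ g₁) (h2 : LaxOf U f₂ g₂) : ∀ᵐ x ∂μT, g₁ x = -g₂ x := by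
  obtain ⟨df₁, tf₁, hd1, ht1, he1⟩ := h1
  obtain ⟨df₂, tf₂, hd2, ht2, he2⟩ := h2
  have hc : ∀ n : ℤ, mcoeff f₁ n = -mcoeff f₂ n := fun n => by
    rw [mcoeff_congr hf n, mcoeff_negf]
  have hdf : ∀ᵐ x ∂μT, df₁ x = -df₂ x := by
    refine matrix_ae_eq_of_mcoeff hd1.1 (InL2.negf hd2.1) fun n => ?_
    rw [hd1.2 n, mcoeff_negf, hd2.2 n, hc n, smul_neg]
  have hUc : ∀ n : ℤ, mcoeff (fun x => U x * f₁ x) n = -(mcoeff (fun x => U x * f₂ x) n) :=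
    fun n => by
      rw [mcoeff_congr (f := fun x => U x * f₁ x) (g := fun x => -(U x * f₂ x))
        (hf.mono fun x hx => by simp only [hx, mul_neg]) n, mcoeff_negf]
  have htf : ∀ᵐ x ∂μT, tf₁ x = -tf₂ x := by
    refine matrix_ae_eq_of_mcoeff ht1.1 (InL2.negf ht2.1) fun n => ?_
    rw [ht1.2 n, mcoeff_negf, ht2.2 n]
    split_ifs with h
    · exact hUc n
    · simp
  filter_upwards [he1, he2, hdf, htf] with x e1 e2 e3 e4
  rw [e1, e2, e3, e4]
  abel

lemma claim_neg {U up : Torus → Mat d} (hup : ProjPosOf U up) :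
    ∀ n : ℕ, ∀ h g : Torus → Mat d,
      LaxIterOf U (n + 1) (fun _ => (1 : Mat d)) h → LaxIterOf U n up g →
      ∀ᵐ x ∂μT, h x = -g x := by
  intro n
  induction n with
  | zero =>
    intro h g hh hg
    obtain ⟨h0, hh0, df, tf, hdf, htf, he⟩ := hh
    have hdf0 : ∀ᵐ x ∂μT, df x = (fun _ : Torus => (0 : Mat d)) x := by
      refine matrix_ae_eq_of_mcoeff hdf.1 InL2_zero fun n => ?_
      rw [hdf.2 n, mcoeff_congr hh0 n, mcoeff_one_mat, mcoeff_zero_fun]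
      split_ifs with hn
      · subst hn; simp
      · simp
    have htfup : ∀ᵐ x ∂μT, tf x = up x := by
      refine matrix_ae_eq_of_mcoeff htf.1 hup.1 fun n => ?_
      rw [htf.2 n, hup.2 n]
      split_ifs with hn
      · exact mcoeff_congr (hh0.mono fun x hx => by rw [hx, mul_one]) n
      · rfl
    have hg' : ∀ᵐ x ∂μT, g x = up x := hg
    filter_upwards [he, hdf0, htfup, hg'] with x e1 e2 e3 e4
    rw [e1, e2, e3, e4]
    simp
  | succ n ih =>
    intro h g hh hg
    obtain ⟨h', hh', hLh⟩ := hh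
    obtain ⟨g', hg', hLg⟩ := hg
    exact lax_congr_neg (ih h' g' hh' hg') hLh hLg

lemma lax_iter_hardy {U up : Torus → Mat d} (hup : ProjPosOf U up) :
    ∀ n : ℕ, ∀ g : Torus → Mat d, LaxIterOf U n up g →
      InL2 g ∧ ∀ m : ℤ, m < 0 → mcoeff g m = 0 := by
  intro n
  induction n with
  | zero =>
    intro g hg
    have hg' : ∀ᵐ x ∂μT, g x = up x := hg
    refine ⟨InL2.congr' hup.1 (hg'.mono fun x hx => hx.symm), fun m hm => ?_⟩
    rw [mcoeff_congr hg' m, hup.2 m, if_neg (not_le.mpr hm)]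
  | succ n ih =>
    intro g hg
    obtain ⟨g', hg', df, tf, hdf, htf, he⟩ := hg
    have hL2 : InL2 g := by
      refine InL2.congr' (f := fun x => df x - tf x) ?_ (he.mono fun x hx => hx.symm)
      exact fun i j => (hdf.1 i j).sub (htf.1 i j)
    refine ⟨hL2, fun m hm => ?_⟩
    rw [mcoeff_congr he m, mcoeff_sub hdf.1 htf.1 m, hdf.2 m, htf.2 m,
      if_neg (not_le.mpr hm), (ih g' hg').2 m hm]
    simp

end Aux

/-- With the measure of `𝕋` normalized to total mass 1, for every Hermitian-valued
`U ∈ C^∞(𝕋, ℂ^{d×d})` (smoothness expressed by membership in every Sobolev space) and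
every `k ≥ 0`, `𝓔_k(U) = tr 𝓜_k(U)`, where `𝓔_k(U) = ⟨L_U^k(Π_{≥0}U) | Π_{≥0}U⟩` and
`𝓜_k(U) = ∫ L_U^{k+2}(𝟏)`. -/
theorem Ek_eq_trace_Mk {d : ℕ} (hd : 1 ≤ d)
    (U : Torus → Mat d) (hsmooth : ∀ m : ℕ, InHk m U) (hH : IsHermitianValued U) :
    ∀ k : ℕ, ∀ up g mk : Torus → Mat d,
      ProjPosOf U up → LaxIterOf U k up g →
      LaxIterOf U (k + 2) (fun _ => (1 : Mat d)) mk →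
      hinner g up = (mint mk).trace := by
  intro k up g mk hup hgiter hmkiter
  classical
  obtain ⟨h, hh, df, tf, hdf, htf, hemk⟩ := hmkiter
  obtain ⟨hgL2, hgneg⟩ := Aux.lax_iter_hardy hup k g hgiter
  have hclaim : ∀ᵐ x ∂μT, h x = -g x := Aux.claim_neg hup k h g hh hgiter
  have hUL2 : InL2 U := (hsmooth 0).1
  -- Hermitian symmetry of Fourier coefficients of U
  have herm : ∀ (n : ℤ) (i j : Fin d),
      (starRingEnd ℂ) (mcoeff U (-n) i j) = mcoeff U n j i := by
    intro n i j
    have e1 : fourierCoeff (fun x => U x j i) n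
        = fourierCoeff (fun x => (starRingEnd ℂ) (U x i j)) n := by
      refine Aux.fourierCoeff_congr_ae (hH.mono fun x hx => ?_) n
      conv_lhs => rw [← hx]
      simp [Matrix.conjTranspose_apply]
    have e2 := Aux.fourierCoeff_conj (fun x => U x i j) n
    rw [Aux.mcoeff_apply, Aux.mcoeff_apply, e1, e2]
  -- LHS: hinner g up as a double sum of integrals
  have hupconjL2 : ∀ i j : Fin d, MemLp (fun x => (starRingEnd ℂ) (up x i j)) 2 μT :=
    fun i j => Aux.memℒp_conj (hup.1 i j)
  have lhs_eq : hinner g up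
      = ∑ i : Fin d, ∑ j : Fin d, ∫ x, g x i j * (starRingEnd ℂ) (up x i j) ∂μT := by
    rw [hinner]
    have e1 : ∀ x : Torus, (g x * (up x)ᴴ).trace
        = ∑ i : Fin d, ∑ j : Fin d, g x i j * (starRingEnd ℂ) (up x i j) := by
      intro x
      simp [Matrix.trace, Matrix.diag, Matrix.mul_apply, Matrix.conjTranspose_apply]
    simp_rw [e1]
    rw [integral_finset_sum _ (fun i _ => integrable_finset_sum _
      (fun j _ => Aux.integrable_mul2 (hgL2 i j) (hupconjL2 i j)))]
    exact Finset.sum_congr rfl fun i _ => integral_finset_sum _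
      (fun j _ => Aux.integrable_mul2 (hgL2 i j) (hupconjL2 i j))
  -- RHS: trace of mean of mk as a double sum of integrals
  have rhs_eq : (mint mk).trace
      = ∑ i : Fin d, ∑ j : Fin d, ∫ x, U x i j * g x j i ∂μT := by
    have t1 : (mint mk).trace = ∑ i : Fin d, ∫ x, mk x i i ∂μT := by
      simp [mint, Matrix.trace, Matrix.diag]
    rw [t1]
    have t2 : ∀ i : Fin d, ∫ x, mk x i i ∂μT
        = ∫ x, df x i i ∂μT - ∫ x, tf x i i ∂μT := by
      intro i
      rw [integral_congr_ae (hemk.mono fun x hx => ?_)]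
      · exact integral_sub (Aux.integrable_of_L2 (hdf.1 i i))
          (Aux.integrable_of_L2 (htf.1 i i))
      · show mk x i i = df x i i - tf x i i
        rw [hx]; rfl
    have t3 : ∀ i : Fin d, ∫ x, df x i i ∂μT = 0 := by
      intro i
      have := (Aux.fourierCoeff_zero_eq (fun x => df x i i)).symm
      rw [this, ← Aux.mcoeff_apply, hdf.2 0]
      simp
    have t4 : ∀ i : Fin d, ∫ x, tf x i i ∂μT = -∫ x, (U x * g x) i i ∂μT := by
      intro i
      have e1 : ∫ x, tf x i i ∂μT = mcoeff tf 0 i i :=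
        (Aux.fourierCoeff_zero_eq (fun x => tf x i i)).symm
      rw [e1, htf.2 0, if_pos le_rfl, Aux.mcoeff_apply, Aux.fourierCoeff_zero_eq]
      rw [integral_congr_ae (hclaim.mono fun x hx => ?_)]
      · exact integral_neg _
      · show (U x * h x) i i = -((U x * g x) i i)
        rw [hx, mul_neg]; rfl
    have t5 : ∀ i : Fin d, ∫ x, (U x * g x) i i ∂μT
        = ∑ j : Fin d, ∫ x, U x i j * g x j i ∂μT := by
      intro i
      have e1 : ∀ x : Torus, (U x * g x) i i = ∑ j : Fin d, U x i j * g x j i :=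
        fun x => Matrix.mul_apply
      simp_rw [e1]
      exact integral_finset_sum _ fun j _ => Aux.integrable_mul2 (hUL2 i j) (hgL2 j i)
    calc ∑ i : Fin d, ∫ x, mk x i i ∂μT
        = ∑ i : Fin d, ∫ x, (U x * g x) i i ∂μT := by
          refine Finset.sum_congr rfl fun i _ => ?_
          rw [t2 i, t3 i, t4 i]; ring
      _ = ∑ i : Fin d, ∑ j : Fin d, ∫ x, U x i j * g x j i ∂μT :=
          Finset.sum_congr rfl fun i _ => t5 i
  -- Termwise identification via orthogonality
  rw [lhs_eq, rhs_eq]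
  conv_rhs => rw [Finset.sum_comm]
  refine Finset.sum_congr rfl fun i _ => Finset.sum_congr rfl fun j _ => ?_
  -- goal: ∫ g i j * conj (up i j) = ∫ U j i * g i j
  have horth : ∫ x, g x i j * ((starRingEnd ℂ) (up x i j) - U x j i) ∂μT = 0 := by
    refine Aux.integral_mul_eq_zero (hgL2 i j) ((hupconjL2 i j).sub (hUL2 j i)) fun n => ?_
    rcases le_or_gt n 0 with hn | hn
    · have hb : fourierCoeff (fun x => (starRingEnd ℂ) (up x i j) - U x j i) n = 0 := by
        rw [Aux.fourierCoeff_sub (hupconjL2 i j) (hUL2 j i) n,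
          Aux.fourierCoeff_conj (fun x => up x i j) n, ← Aux.mcoeff_apply, ← Aux.mcoeff_apply,
          hup.2 (-n), if_pos (by omega), herm n i j, sub_self]
      rw [hb, mul_zero]
    · have ha : fourierCoeff (fun x => g x i j) (-n) = 0 := by
        rw [← Aux.mcoeff_apply, hgneg (-n) (by omega)]
        rfl
      rw [ha, zero_mul]
  have hint1 : Integrable (fun x => g x i j * (starRingEnd ℂ) (up x i j)) μT :=
    Aux.integrable_mul2 (hgL2 i j) (hupconjL2 i j)
  have hint2 : Integrable (fun x => g x i j * U x j i) μT :=
    Aux.integrable_mul2 (hgL2 i j) (hUL2 j i)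
  have hsub : ∫ x, g x i j * ((starRingEnd ℂ) (up x i j) - U x j i) ∂μT
      = (∫ x, g x i j * (starRingEnd ℂ) (up x i j) ∂μT) - ∫ x, g x i j * U x j i ∂μT := by
    simp_rw [mul_sub]
    exact integral_sub hint1 hint2
  have e3 : ∫ x, g x i j * (starRingEnd ℂ) (up x i j) ∂μT = ∫ x, g x i j * U x j i ∂μT := by
    exact sub_eq_zero.mp (hsub.symm.trans horth)
  rw [e3]
  simp_rw [mul_comm]
end
end
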